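/- Let V = (d, Q, T) be an affine ℤ-VASS whose monoid M_V is finite, and let p, q ∈ Q. Then the reachability relation {(u, v) ∈ ℤ^d × ℤ^d : p(u) →* q(v)}, viewed as a subset of ℤ^{2d}, is semilinear. -/

import Mathlib

open Pointwise



/-- An affine ℤ-VASS of dimension `d` with control-states `Q` and transitions `T`:
each transition `t` has a source state, a target state, a matrix `A(t)` and a vector `b(t)`. -/
structure AffineZVASS (d : ℕ) (Q : Type) (T : Type) where
  src : T → Q
  tgt : T → Q
  mat : T → Matrix (Fin d) (Fin d) ℤ
  vec : T → (Fin d → ℤ)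

namespace AffineZVASS

variable {d : ℕ} {Q T : Type}

/-- One step along transition `t`: from `src t (u)` to `tgt t (A(t)·u + b(t))`. -/
def Step (V : AffineZVASS d Q T) (t : T) (c c' : Q × (Fin d → ℤ)) : Prop :=
  c.1 = V.src t ∧ c' = (V.tgt t, (V.mat t).mulVec c.2 + V.vec t)

/-- `V.StepWord w c c'` : `c →_w c'`. -/
def StepWord (V : AffineZVASS d Q T) : List T → (Q × (Fin d → ℤ)) → (Q × (Fin d → ℤ)) → Prop
  | [], c, c' => c = c'
  | t :: w, c, c' => ∃ c'', V.Step t c c'' ∧ V.StepWord w c'' c'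

/-- Reachability: `c →* c'`. -/
def Reach (V : AffineZVASS d Q T) (c c' : Q × (Fin d → ℤ)) : Prop :=
  ∃ w : List T, V.StepWord w c c'

/-- `w` is a path from `p` to `q` in the underlying graph of `V`. -/
def IsPath (V : AffineZVASS d Q T) : List T → Q → Q → Prop
  | [], p, q => p = q
  | t :: w, p, q => V.src t = p ∧ V.IsPath w (V.tgt t) q

/-- The effect `w(u)` of a word of transitions on a counter vector:
`ε(u) = u` and `(wt)(u) = A(t)·(w(u)) + b(t)`. -/
def eff (V : AffineZVASS d Q T) : List T → (Fin d → ℤ) → (Fin d → ℤ)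
  | [], u => u
  | t :: w, u => V.eff w ((V.mat t).mulVec u + V.vec t)

/-- The matrix `M(w)`: `M(ε) = I` and `M(wt) = A(t)·M(w)`. -/
def Mword (V : AffineZVASS d Q T) : List T → Matrix (Fin d) (Fin d) ℤ
  | [] => 1
  | t :: w => V.Mword w * V.mat t

end AffineZVASS

namespace AffineZVASS

variable {d : ℕ} {Q T : Type}

/-- The monoid `M_V` of an affine ℤ-VASS. -/
def monoidOf (V : AffineZVASS d Q T) : Submonoid (Matrix (Fin d) (Fin d) ℤ) :=
  Submonoid.closure (Set.range V.mat)

/-- The vector `(x, y) ∈ ℤ^{2d}`. -/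
def concatVec {d : ℕ} (x y : Fin d → ℤ) : Fin (2 * d) → ℤ := fun i =>
  if h : (i : ℕ) < d then x ⟨i, h⟩ else y ⟨(i : ℕ) - d, by omega⟩

end AffineZVASS

/-- A linear subset of `ℤ^k`: `{b + n₁·p₁ + ⋯ + n_m·p_m : n₁, …, n_m ∈ ℕ}`. -/
def IsLinearSet' {k : ℕ} (S : Set (Fin k → ℤ)) : Prop :=
  ∃ (b : Fin k → ℤ) (m : ℕ) (per : Fin m → (Fin k → ℤ)),
    S = {x | ∃ n : Fin m → ℕ, x = b + ∑ i, (n i : ℤ) • per i}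

/-- A semilinear subset of `ℤ^k`: a finite union of linear sets. -/
def IsSemilinearSet' {k : ℕ} (S : Set (Fin k → ℤ)) : Prop :=
  ∃ (m : ℕ) (L : Fin m → Set (Fin k → ℤ)), (∀ i, IsLinearSet' (L i)) ∧ S = ⋃ i, L i

namespace SLAux

variable {k : ℕ}

/-- A "span-form" linear set. -/
def LinS (b : Fin k → ℤ) (P : Set (Fin k → ℤ)) : Set (Fin k → ℤ) :=
  {x | ∃ y ∈ (Submodule.span ℕ P : Set (Fin k → ℤ)), x = b + y}

lemma isLinearSet_iff {S : Set (Fin k → ℤ)} :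
    IsLinearSet' S ↔ ∃ (b : Fin k → ℤ) (P : Set (Fin k → ℤ)), P.Finite ∧ S = LinS b P := by
  constructor
  · rintro ⟨b, m, per, rfl⟩
    refine ⟨b, Set.range per, Set.finite_range per, ?_⟩
    ext x
    simp only [LinS, Set.mem_setOf_eq]
    constructor
    · rintro ⟨n, rfl⟩
      refine ⟨∑ i, (n i : ℤ) • per i, ?_, rfl⟩
      rw [SetLike.mem_coe, show (∑ i, (n i : ℤ) • per i) = ∑ i, n i • per i by
        simp [natCast_zsmul]]
      exact (Submodule.mem_span_range_iff_exists_fun ℕ).2 ⟨n, rfl⟩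
    · rintro ⟨y, hy, rfl⟩
      obtain ⟨n, rfl⟩ := (Submodule.mem_span_range_iff_exists_fun ℕ).1 hy
      exact ⟨n, by simp [natCast_zsmul]⟩
  · rintro ⟨b, P, hP, rfl⟩
    obtain ⟨s, rfl⟩ := hP.exists_finset_coe
    refine ⟨b, s.card, fun i => (s.equivFin.symm i : _), ?_⟩
    have hr : Set.range (fun i => ((s.equivFin.symm i : { x // x ∈ s}) : Fin k → ℤ)) = (s : Set _) := by
      ext z
      constructor
      · rintro ⟨i, rfl⟩; exact (s.equivFin.symm i).2
      · intro hz; exact ⟨s.equivFin ⟨z, hz⟩, by simp⟩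
    ext x
    simp only [LinS, Set.mem_setOf_eq]
    constructor
    · rintro ⟨y, hy, rfl⟩
      rw [SetLike.mem_coe, ← hr] at hy
      obtain ⟨n, rfl⟩ := (Submodule.mem_span_range_iff_exists_fun ℕ).1 hy
      exact ⟨n, by simp [natCast_zsmul]⟩
    · rintro ⟨n, rfl⟩
      refine ⟨∑ i, (n i : ℤ) • _, ?_, rfl⟩
      rw [SetLike.mem_coe, ← hr, show (∑ i, (n i : ℤ) • ((s.equivFin.symm i : { x // x ∈ s}) : Fin k → ℤ)) = ∑ i, n i • ((s.equivFin.symm i : { x // x ∈ s}) : Fin k → ℤ) by simp [natCast_zsmul]]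
      exact (Submodule.mem_span_range_iff_exists_fun ℕ).2 ⟨n, rfl⟩

lemma isLinearSet_linS {b : Fin k → ℤ} {P : Set (Fin k → ℤ)} (hP : P.Finite) :
    IsLinearSet' (LinS b P) := isLinearSet_iff.2 ⟨b, P, hP, rfl⟩

lemma IsLinearSet.isSemilinearSet {S : Set (Fin k → ℤ)} (h : IsLinearSet' S) :
    IsSemilinearSet' S :=
  ⟨1, fun _ => S, fun _ => h, (Set.iUnion_const S).symm⟩

lemma isSemilinearSet_empty : IsSemilinearSet' (∅ : Set (Fin k → ℤ)) :=
  ⟨0, fun i => i.elim0, fun i => i.elim0, by simp⟩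

/-- finite unions over a Fintype. -/
lemma isSemilinearSet_iUnion {ι : Type} [Fintype ι] {f : ι → Set (Fin k → ℤ)}
    (h : ∀ i, IsSemilinearSet' (f i)) : IsSemilinearSet' (⋃ i, f i) := by
  choose m L hL hf using h
  classical
  let e := Fintype.equivFin (Σ i : ι, Fin (m i))
  refine ⟨Fintype.card (Σ i : ι, Fin (m i)), fun n => L (e.symm n).1 (e.symm n).2,
    fun n => hL _ _, ?_⟩
  ext x
  simp only [Set.mem_iUnion]
  constructor
  · rintro ⟨i, hx⟩
    rw [hf i] at hx
    obtain ⟨j, hj⟩ := Set.mem_iUnion.1 hx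
    refine ⟨e ⟨i, j⟩, ?_⟩
    rw [Equiv.symm_apply_apply]
    exact hj
  · rintro ⟨n, hn⟩
    exact ⟨(e.symm n).1, (hf _).symm ▸ Set.mem_iUnion.2 ⟨(e.symm n).2, hn⟩⟩

lemma IsSemilinearSet.union {S T : Set (Fin k → ℤ)} (hS : IsSemilinearSet' S)
    (hT : IsSemilinearSet' T) : IsSemilinearSet' (S ∪ T) := by
  rw [Set.union_eq_iUnion]
  exact isSemilinearSet_iUnion (fun b => by cases b <;> simpa)

lemma linS_add {b1 b2 : Fin k → ℤ} {P1 P2 : Set (Fin k → ℤ)} :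
    LinS b1 P1 + LinS b2 P2 = LinS (b1 + b2) (P1 ∪ P2) := by
  ext x
  simp only [Set.mem_add, LinS, Set.mem_setOf_eq]
  constructor
  · rintro ⟨_, ⟨y1, hy1, rfl⟩, _, ⟨y2, hy2, rfl⟩, rfl⟩
    refine ⟨y1 + y2, ?_, by abel⟩
    rw [SetLike.mem_coe, Submodule.span_union]
    exact add_mem (Submodule.mem_sup_left hy1) (Submodule.mem_sup_right hy2)
  · rintro ⟨y, hy, rfl⟩
    rw [SetLike.mem_coe, Submodule.span_union, Submodule.mem_sup] at hy
    obtain ⟨y1, hy1, y2, hy2, rfl⟩ := hy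
    exact ⟨b1 + y1, ⟨y1, hy1, rfl⟩, b2 + y2, ⟨y2, hy2, rfl⟩, by abel⟩

lemma IsSemilinearSet.add {S T : Set (Fin k → ℤ)} (hS : IsSemilinearSet' S)
    (hT : IsSemilinearSet' T) : IsSemilinearSet' (S + T) := by
  obtain ⟨m, L, hL, rfl⟩ := hS
  obtain ⟨m', L', hL', rfl⟩ := hT
  rw [Set.iUnion_add]
  refine isSemilinearSet_iUnion fun i => ?_
  rw [Set.add_iUnion]
  refine isSemilinearSet_iUnion fun j => ?_
  obtain ⟨b1, P1, hP1, h1⟩ := isLinearSet_iff.1 (hL i)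
  obtain ⟨b2, P2, hP2, h2⟩ := isLinearSet_iff.1 (hL' j)
  rw [h1, h2, linS_add]
  exact IsLinearSet.isSemilinearSet (isLinearSet_linS (hP1.union hP2))

lemma IsSemilinearSet.image {n : ℕ} {S : Set (Fin k → ℤ)} (hS : IsSemilinearSet' S)
    (F : (Fin k → ℤ) →+ (Fin n → ℤ)) : IsSemilinearSet' (F '' S) := by
  obtain ⟨m, L, hL, rfl⟩ := hS
  rw [Set.image_iUnion]
  refine isSemilinearSet_iUnion fun i => ?_
  obtain ⟨b, P, hP, h1⟩ := isLinearSet_iff.1 (hL i)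
  rw [h1]
  have hms : Submodule.span ℕ (⇑F '' P) = Submodule.map F.toNatLinearMap (Submodule.span ℕ P) := by
    rw [Submodule.map_span]
    rfl
  have himg : ⇑F '' LinS b P = LinS (F b) (⇑F '' P) := by
    ext x
    simp only [LinS, Set.mem_image, Set.mem_setOf_eq]
    constructor
    · rintro ⟨_, ⟨y, hy, rfl⟩, rfl⟩
      refine ⟨F y, ?_, by rw [map_add]⟩
      rw [SetLike.mem_coe, hms]
      exact Submodule.mem_map_of_mem hy
    · rintro ⟨y, hy, rfl⟩
      rw [SetLike.mem_coe, hms] at hy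
      obtain ⟨z, hz, rfl⟩ := hy
      exact ⟨b + z, ⟨z, hz, rfl⟩, by rw [map_add]; rfl⟩
  rw [himg]
  exact IsLinearSet.isSemilinearSet (isLinearSet_linS (hP.image _))

lemma isLinearSet_singleton (v : Fin k → ℤ) : IsLinearSet' ({v} : Set (Fin k → ℤ)) := by
  rw [isLinearSet_iff]
  refine ⟨v, ∅, Set.finite_empty, ?_⟩
  ext x
  simp [LinS, Submodule.span_empty]

lemma isSemilinearSet_of_finite {S : Set (Fin k → ℤ)} (h : S.Finite) :
    IsSemilinearSet' S := by
  classical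
  haveI := h.fintype
  have : S = ⋃ (x : S), ({(x : Fin k → ℤ)} : Set (Fin k → ℤ)) := by
    ext z; simp
  rw [this]
  exact isSemilinearSet_iUnion fun x =>
    IsLinearSet.isSemilinearSet (isLinearSet_singleton _)

lemma isSemilinearSet_univ : IsSemilinearSet' (Set.univ : Set (Fin k → ℤ)) := by
  classical
  refine IsLinearSet.isSemilinearSet (isLinearSet_iff.2
    ⟨0, Set.range (fun i : Fin k => Pi.single i (1:ℤ)) ∪
        Set.range (fun i : Fin k => -Pi.single i (1:ℤ)),
      (Set.finite_range _).union (Set.finite_range _), ?_⟩)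
  ext x
  simp only [Set.mem_univ, LinS, Set.mem_setOf_eq, true_iff]
  refine ⟨x, ?_, by abel⟩
  rw [SetLike.mem_coe]
  have hx : x = ∑ i, x i • Pi.single i (1:ℤ) := by
    ext j
    simp [Pi.single_apply, Finset.sum_apply]
  rw [hx]
  refine Submodule.sum_mem _ fun i _ => ?_
  rcases Int.eq_nat_or_neg (x i) with ⟨n, hn | hn⟩
  · rw [hn, natCast_zsmul]
    exact Submodule.smul_mem _ n (Submodule.subset_span (Set.mem_union_left _ ⟨i, rfl⟩))
  · rw [hn, neg_smul, ← smul_neg, natCast_zsmul]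
    exact Submodule.smul_mem _ n (Submodule.subset_span (Set.mem_union_right _ ⟨i, rfl⟩))

/-- Key: decomposition step for the closure lemma. -/
lemma linS_base_add_mem_closure {m : ℕ} (b : Fin m → (Fin k → ℤ))
    (P : Fin m → Set (Fin k → ℤ)) (S : Set (Fin k → ℤ))
    (hS : ∀ i, LinS (b i) (P i) ⊆ S) (I : Finset (Fin m)) :
    ∀ y ∈ Submodule.span ℕ ((b '' ↑I) ∪ ⋃ i ∈ I, P i),
      (∑ i ∈ I, b i) + y ∈ AddSubmonoid.closure S := by
  classical
  induction I using Finset.induction with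
  | empty =>
    intro y hy
    simp only [Finset.coe_empty, Set.image_empty, Finset.notMem_empty, Set.iUnion_of_empty,
      Set.iUnion_empty, Set.union_empty, Submodule.span_empty, Submodule.mem_bot] at hy
    simp [hy, AddSubmonoid.zero_mem]
  | @insert j I hjI ih =>
    intro y hy
    have hsetalg : ((b '' ↑(insert j I)) ∪ ⋃ i ∈ (insert j I : Finset (Fin m)), P i)
        = ({b j} ∪ P j) ∪ ((b '' ↑I) ∪ ⋃ i ∈ I, P i) := by
      rw [Finset.coe_insert, Set.image_insert_eq, Finset.set_biUnion_insert]
      ext z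
      simp only [Set.mem_union, Set.mem_insert_iff, Set.mem_singleton_iff]
      tauto
    rw [hsetalg, Submodule.span_union, Submodule.mem_sup] at hy
    obtain ⟨y1, hy1, y2, hy2, rfl⟩ := hy
    rw [Submodule.span_union, Submodule.mem_sup] at hy1
    obtain ⟨z1, hz1, z2, hz2, rfl⟩ := hy1
    rw [Submodule.mem_span_singleton] at hz1
    obtain ⟨n, rfl⟩ := hz1
    have h1 : b j + z2 ∈ S := hS j ⟨z2, hz2, rfl⟩
    have h2 : b j ∈ S := hS j ⟨0, Submodule.zero_mem _, (add_zero _).symm⟩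
    have h3 : (∑ i ∈ I, b i) + y2 ∈ AddSubmonoid.closure S := ih y2 hy2
    have : (∑ i ∈ insert j I, b i) + (n • b j + z2 + y2)
        = (b j + z2) + n • b j + ((∑ i ∈ I, b i) + y2) := by
      rw [Finset.sum_insert hjI]; abel
    rw [this]
    exact add_mem (add_mem (AddSubmonoid.subset_closure h1)
      (AddSubmonoid.nsmul_mem _ (AddSubmonoid.subset_closure h2) n)) h3

lemma IsSemilinearSet.closure {S : Set (Fin k → ℤ)} (hS : IsSemilinearSet' S) :
    IsSemilinearSet' ((AddSubmonoid.closure S : AddSubmonoid (Fin k → ℤ)) : Set (Fin k → ℤ)) := by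
  classical
  obtain ⟨m, L, hL, rfl⟩ := hS
  have := fun i => isLinearSet_iff.1 (hL i)
  choose b P hPfin hLP using this
  have key : ((AddSubmonoid.closure (⋃ i, L i) : AddSubmonoid (Fin k → ℤ)) : Set (Fin k → ℤ))
      = ⋃ (I : Finset (Fin m)), LinS (∑ i ∈ I, b i) ((b '' ↑I) ∪ ⋃ i ∈ I, P i) := by
    ext x
    simp only [SetLike.mem_coe, Set.mem_iUnion]
    constructor
    · intro hx
      induction hx using AddSubmonoid.closure_induction with
      | mem z hz =>
        obtain ⟨i, hi⟩ := Set.mem_iUnion.1 hz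
        rw [hLP i] at hi
        obtain ⟨y, hy, rfl⟩ := hi
        refine ⟨{i}, y, ?_, by simp⟩
        refine Submodule.span_mono ?_ hy
        intro z hz
        simp only [Finset.coe_singleton, Set.image_singleton, Finset.mem_singleton,
          Set.iUnion_iUnion_eq_left, Set.mem_union]
        exact Or.inr hz
      | zero =>
        exact ⟨∅, 0, Submodule.zero_mem _, by simp⟩
      | add z1 z2 hz1 hz2 ih1 ih2 =>
        obtain ⟨I1, y1, hy1, hz1e⟩ := ih1
        obtain ⟨I2, y2, hy2, hz2e⟩ := ih2
        refine ⟨I1 ∪ I2, (∑ i ∈ I1 ∩ I2, b i) + y1 + y2, ?_, ?_⟩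
        · refine add_mem (add_mem ?_ (Submodule.span_mono ?_ hy1)) (Submodule.span_mono ?_ hy2)
          · refine Submodule.sum_mem _ fun i hi => Submodule.subset_span ?_
            exact Set.mem_union_left _ ⟨i, by simp only [Finset.coe_union, Set.mem_union]; exact Or.inl (by simpa using Finset.mem_of_mem_inter_left hi), rfl⟩
          · intro z hz
            rcases hz with hz | hz
            · exact Set.mem_union_left _ (Set.image_mono (by simp [Finset.coe_subset, Finset.subset_union_left]) hz)
            · refine Set.mem_union_right _ ?_
              simp only [Set.mem_iUnion] at hz ⊢
              obtain ⟨i, hi, hzz⟩ := hz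
              exact ⟨i, Finset.mem_union_left _ hi, hzz⟩
          · intro z hz
            rcases hz with hz | hz
            · exact Set.mem_union_left _ (Set.image_mono (by simp [Finset.coe_subset, Finset.subset_union_right]) hz)
            · refine Set.mem_union_right _ ?_
              simp only [Set.mem_iUnion] at hz ⊢
              obtain ⟨i, hi, hzz⟩ := hz
              exact ⟨i, Finset.mem_union_right _ hi, hzz⟩
        · rw [hz1e, hz2e]
          have := Finset.sum_union_inter (s₁ := I1) (s₂ := I2) (f := b)
          have h := this
          calc (∑ i ∈ I1, b i) + y1 + ((∑ i ∈ I2, b i) + y2)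
              = ((∑ i ∈ I1, b i) + (∑ i ∈ I2, b i)) + (y1 + y2) := by abel
            _ = ((∑ i ∈ I1 ∪ I2, b i) + (∑ i ∈ I1 ∩ I2, b i)) + (y1 + y2) := by rw [h]
            _ = (∑ i ∈ I1 ∪ I2, b i) + ((∑ i ∈ I1 ∩ I2, b i) + y1 + y2) := by abel
    · rintro ⟨I, y, hy, rfl⟩
      refine linS_base_add_mem_closure b P (⋃ i, L i) (fun i => ?_) I y hy
      rw [← hLP i]
      exact Set.subset_iUnion L i
  rw [key]
  refine isSemilinearSet_iUnion fun I => ?_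
  refine IsLinearSet.isSemilinearSet (isLinearSet_linS ?_)
  exact ((I.finite_toSet.image b)).union (Set.Finite.biUnion I.finite_toSet fun i _ => hPfin i)

section Graph

variable {σ ε : Type} (gs gt : ε → σ) (lab : ε → (Fin k → ℤ))

/-- Path from `a` to `b` along edges `w`, all intermediate states in `A`. -/
def gPathIn : List σ → List ε → σ → σ → Prop
  | _, [], a, b => a = b
  | _, [e], a, b => gs e = a ∧ gt e = b
  | A, e :: w, a, b => gs e = a ∧ gt e ∈ A ∧ gPathIn A w (gt e) b

/-- Displacement of a path. -/
def disp (w : List ε) : Fin k → ℤ := (w.map lab).sum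

@[simp] lemma disp_nil : disp lab ([] : List ε) = 0 := rfl

@[simp] lemma disp_cons (e : ε) (w : List ε) :
    disp lab (e :: w) = lab e + disp lab w := by simp [disp]

@[simp] lemma disp_append (u v : List ε) :
    disp lab (u ++ v) = disp lab u + disp lab v := by simp [disp]

def DSet (A : List σ) (a b : σ) : Set (Fin k → ℤ) :=
  {x | ∃ w, gPathIn gs gt A w a b ∧ x = disp lab w}

variable {gs gt lab}

lemma gPathIn_mono {A A' : List σ} (h : ∀ s ∈ A, s ∈ A') :
    ∀ w a b, gPathIn gs gt A w a b → gPathIn gs gt A' w a b := by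
  intro w
  induction w with
  | nil => intro a b hw; exact hw
  | cons e w ih =>
    intro a b hw
    cases w with
    | nil => exact hw
    | cons e' w' =>
      obtain ⟨h1, h2, h3⟩ := hw
      exact ⟨h1, h _ h2, ih _ _ h3⟩

lemma gPathIn_cons {A : List σ} {e : ε} {w : List ε} {a b : σ}
    (h1 : gs e = a) (h2 : gt e ∈ A) (h3 : gPathIn gs gt A w (gt e) b) :
    gPathIn gs gt A (e :: w) a b := by
  cases w with
  | nil => exact ⟨h1, h3⟩
  | cons e' w' => exact ⟨h1, h2, h3⟩

lemma gPathIn_append {A : List σ} {u v : List ε} {a c b : σ} (hc : c ∈ A)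
    (hu : gPathIn gs gt A u a c) (hv : gPathIn gs gt A v c b) :
    gPathIn gs gt A (u ++ v) a b := by
  induction u generalizing a with
  | nil => cases hu; exact hv
  | cons e u ih =>
    cases u with
    | nil =>
      obtain ⟨h1, h2⟩ := hu
      exact gPathIn_cons h1 (h2 ▸ hc) (h2 ▸ hv)
    | cons e' u' =>
      obtain ⟨h1, h2, h3⟩ := hu
      exact gPathIn_cons h1 h2 (ih h3)

lemma dset_concat {A : List σ} {a c b : σ} (hc : c ∈ A) {x y : Fin k → ℤ}
    (hx : x ∈ DSet gs gt lab A a c) (hy : y ∈ DSet gs gt lab A c b) :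
    x + y ∈ DSet gs gt lab A a b := by
  obtain ⟨u, hu, rfl⟩ := hx
  obtain ⟨v, hv, rfl⟩ := hy
  exact ⟨u ++ v, gPathIn_append hc hu hv, by simp⟩

lemma dset_mono {A A' : List σ} (h : ∀ s ∈ A, s ∈ A') (a b : σ) :
    DSet gs gt lab A a b ⊆ DSet gs gt lab A' a b := by
  rintro x ⟨w, hw, rfl⟩
  exact ⟨w, gPathIn_mono h w a b hw, rfl⟩

lemma dset_insert (r : σ) (A : List σ) (a b : σ) :
    DSet gs gt lab (r :: A) a b = DSet gs gt lab A a b ∪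
      (DSet gs gt lab A a r +
        ((AddSubmonoid.closure (DSet gs gt lab A r r) : AddSubmonoid (Fin k → ℤ)) : Set (Fin k → ℤ)) +
        DSet gs gt lab A r b) := by
  have hsub : ∀ s ∈ A, s ∈ r :: A := fun s hs => List.mem_cons_of_mem r hs
  have hstar : ((AddSubmonoid.closure (DSet gs gt lab A r r) : AddSubmonoid (Fin k → ℤ)) : Set (Fin k → ℤ))
      ⊆ DSet gs gt lab (r :: A) r r := by
    intro x hx
    rw [SetLike.mem_coe] at hx
    induction hx using AddSubmonoid.closure_induction with
    | mem z hz => exact dset_mono hsub r r hz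
    | zero => exact ⟨[], rfl, by simp⟩
    | add z1 z2 hz1 hz2 ih1 ih2 => exact dset_concat List.mem_cons_self ih1 ih2
  apply Set.Subset.antisymm
  · rintro x ⟨w, hw, rfl⟩
    clear hstar
    induction w generalizing a with
    | nil =>
      exact Or.inl ⟨[], hw, rfl⟩
    | cons e w ih =>
      cases w with
      | nil =>
        exact Or.inl ⟨[e], hw, rfl⟩
      | cons e' w' =>
        obtain ⟨h1, h2, h3⟩ := hw
        have ihm := ih (gt e) h3
        rw [List.mem_cons] at h2
        rcases h2 with h2 | h2
        · -- gt e = r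
          refine Or.inr ?_
          have he : lab e ∈ DSet gs gt lab A a r := ⟨[e], ⟨h1, h2⟩, by simp⟩
          rcases ihm with hm | hm
          · rw [h2] at hm
            refine Set.mem_add.2 ⟨lab e + 0, Set.mem_add.2 ⟨lab e, he, 0, ?_, rfl⟩,
              disp lab (e' :: w'), hm, by simp⟩
            exact AddSubmonoid.zero_mem _
          · obtain ⟨y12, hy12, y3, hy3, hsum⟩ := Set.mem_add.1 hm
            obtain ⟨y1, hy1, y2, hy2, hsum2⟩ := Set.mem_add.1 hy12
            rw [h2] at hy1
            refine Set.mem_add.2 ⟨lab e + (y1 + y2), Set.mem_add.2 ⟨lab e, he, y1 + y2, ?_, rfl⟩,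
              y3, hy3, ?_⟩
            · exact AddSubmonoid.add_mem _ (AddSubmonoid.subset_closure hy1) hy2
            · rw [disp_cons, ← hsum, ← hsum2]; abel
        · -- gt e ∈ A
          rcases ihm with hm | hm
          · obtain ⟨w'', hw'', heq⟩ := hm
            exact Or.inl ⟨e :: w'', gPathIn_cons h1 h2 hw'', by simp [heq]⟩
          · refine Or.inr ?_
            obtain ⟨y12, hy12, y3, hy3, hsum⟩ := Set.mem_add.1 hm
            obtain ⟨y1, hy1, y2, hy2, hsum2⟩ := Set.mem_add.1 hy12
            obtain ⟨w1, hw1, heq1⟩ := hy1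
            refine Set.mem_add.2 ⟨(lab e + y1) + y2,
              Set.mem_add.2 ⟨lab e + y1, ⟨e :: w1, gPathIn_cons h1 h2 hw1, by simp [heq1]⟩,
                y2, hy2, rfl⟩, y3, hy3, ?_⟩
            rw [disp_cons, ← hsum, ← hsum2]; abel
  · intro x hx
    rcases hx with hx | hx
    · exact dset_mono hsub a b hx
    · obtain ⟨y12, hy12, y3, hy3, hsum⟩ := Set.mem_add.1 hx
      obtain ⟨y1, hy1, y2, hy2, hsum2⟩ := Set.mem_add.1 hy12
      rw [← hsum, ← hsum2]
      have hr : r ∈ r :: A := List.mem_cons_self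
      exact dset_concat hr (dset_concat hr (dset_mono hsub a r hy1) (hstar hy2))
        (dset_mono hsub r b hy3)

lemma isSemilinearSet_dset [Fintype ε] (A : List σ) (a b : σ) :
    IsSemilinearSet' (DSet gs gt lab A a b) := by
  induction A generalizing a b with
  | nil =>
    refine isSemilinearSet_of_finite (Set.Finite.subset
      ((Set.finite_singleton 0).union (Set.finite_range lab)) ?_)
    rintro x ⟨w, hw, rfl⟩
    cases w with
    | nil => exact Or.inl (by simp)
    | cons e w =>
      cases w with
      | nil => exact Or.inr ⟨e, by simp⟩
      | cons e' w' => exact absurd hw.2.1 List.not_mem_nil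
  | cons r A ih =>
    rw [dset_insert]
    exact IsSemilinearSet.union (ih a b) (IsSemilinearSet.add (IsSemilinearSet.add (ih a r) (IsSemilinearSet.closure (ih r r))) (ih r b))

end Graph

section VASS

variable {d : ℕ} {Q T : Type} (V : AffineZVASS d Q T)

open AffineZVASS Matrix

lemma eff_affine : ∀ (w : List T) (u : Fin d → ℤ),
    V.eff w u = (V.Mword w).mulVec u + V.eff w 0 := by
  intro w
  induction w with
  | nil => intro u; simp [AffineZVASS.eff, AffineZVASS.Mword, Matrix.one_mulVec]
  | cons t w ih =>
    intro u
    show V.eff w ((V.mat t).mulVec u + V.vec t)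
      = (V.Mword w * V.mat t).mulVec u + V.eff w ((V.mat t).mulVec 0 + V.vec t)
    rw [ih ((V.mat t).mulVec u + V.vec t), ih ((V.mat t).mulVec 0 + V.vec t)]
    rw [Matrix.mulVec_add, Matrix.mulVec_add, Matrix.mulVec_mulVec, Matrix.mulVec_zero,
      Matrix.mulVec_zero]
    abel

lemma stepWord_iff : ∀ (w : List T) (p : Q) (u : Fin d → ℤ) (c' : Q × (Fin d → ℤ)),
    V.StepWord w (p, u) c' ↔ (V.IsPath w p c'.1 ∧ c'.2 = V.eff w u) := by
  intro w
  induction w with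
  | nil =>
    intro p u c'
    show (p, u) = c' ↔ p = c'.1 ∧ c'.2 = u
    constructor
    · rintro rfl; exact ⟨rfl, rfl⟩
    · rintro ⟨h1, h2⟩; cases c'; cases h1; cases h2; rfl
  | cons t w ih =>
    intro p u c'
    constructor
    · rintro ⟨c'', ⟨h1, rfl⟩, hsw⟩
      obtain ⟨hp, he⟩ := (ih _ _ _).1 hsw
      exact ⟨⟨h1.symm, hp⟩, he⟩
    · rintro ⟨⟨h1, hp⟩, he⟩
      exact ⟨(V.tgt t, (V.mat t).mulVec u + V.vec t), ⟨h1.symm, rfl⟩,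
        (ih _ _ _).2 ⟨hp, he⟩⟩

lemma mword_mem (w : List T) : V.Mword w ∈ V.monoidOf := by
  induction w with
  | nil => exact one_mem _
  | cons t w ih => exact mul_mem ih (Submonoid.subset_closure ⟨t, rfl⟩)

lemma mword_append (u v : List T) : V.Mword (u ++ v) = V.Mword v * V.Mword u := by
  induction u with
  | nil => simp [AffineZVASS.Mword]
  | cons t u ih =>
    show V.Mword (u ++ v) * V.mat t = V.Mword v * (V.Mword u * V.mat t)
    rw [ih, mul_assoc]

lemma eff_append (u v : List T) : ∀ z, V.eff (u ++ v) z = V.eff v (V.eff u z) := by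
  induction u with
  | nil => intro z; rfl
  | cons t u ih => intro z; exact ih _

lemma isPath_append {u v : List T} {p r q : Q} (hu : V.IsPath u p r) (hv : V.IsPath v r q) :
    V.IsPath (u ++ v) p q := by
  induction u generalizing p with
  | nil => cases hu; exact hv
  | cons t u ih => exact ⟨hu.1, ih hu.2⟩

/-- Source of an edge in the simulation graph. -/
def gsV : T × ↥V.monoidOf → Q × ↥V.monoidOf := fun e => (V.tgt e.1, e.2)

/-- Target of an edge in the simulation graph. -/
def gtV : T × ↥V.monoidOf → Q × ↥V.monoidOf := fun e =>
  (V.src e.1, ⟨(e.2 : Matrix (Fin d) (Fin d) ℤ) * V.mat e.1,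
    mul_mem e.2.2 (Submonoid.subset_closure ⟨e.1, rfl⟩)⟩)

/-- Label of an edge in the simulation graph. -/
def labV : T × ↥V.monoidOf → (Fin d → ℤ) := fun e =>
  (e.2 : Matrix (Fin d) (Fin d) ℤ).mulVec (V.vec e.1)

lemma graph_sound (A : List (Q × ↥V.monoidOf)) :
    ∀ (x : List (T × ↥V.monoidOf)) (a : Q) (N : ↥V.monoidOf) (b : Q) (N' : ↥V.monoidOf),
      gPathIn (gsV V) (gtV V) A x (a, N) (b, N') →
      ∃ w : List T, V.IsPath w b a ∧
        (N' : Matrix (Fin d) (Fin d) ℤ) = (N : Matrix (Fin d) (Fin d) ℤ) * V.Mword w ∧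
        disp (labV V) x = (N : Matrix (Fin d) (Fin d) ℤ).mulVec (V.eff w 0) := by
  intro x
  induction x with
  | nil =>
    intro a N b N' hx
    have hx' : ((a, N) : Q × ↥V.monoidOf) = (b, N') := hx
    have h1 : a = b := congrArg Prod.fst hx'
    have h2 : N = N' := congrArg Prod.snd hx'
    exact ⟨[], h1.symm, by simp [AffineZVASS.Mword, ← h2], by simp [AffineZVASS.eff]⟩
  | cons e x' ih =>
    intro a N b N' hx
    have hsrc : gsV V e = (a, N) ∧ gPathIn (gsV V) (gtV V) A x' (gtV V e) (b, N') := by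
      cases x' with
      | nil => exact ⟨hx.1, hx.2⟩
      | cons e' x'' => exact ⟨hx.1, hx.2.2⟩
    obtain ⟨hse, hrest⟩ := hsrc
    have ha : V.tgt e.1 = a := congrArg Prod.fst hse
    have hN : e.2 = N := congrArg Prod.snd hse
    obtain ⟨w', hw', hm', hd'⟩ := ih (V.src e.1) _ b N' hrest
    refine ⟨w' ++ [e.1], ?_, ?_, ?_⟩
    · refine isPath_append V hw' ?_
      exact ⟨rfl, ha⟩
    · rw [hm', mword_append V w' [e.1]]
      show _ = (N : Matrix (Fin d) (Fin d) ℤ) * (V.Mword [e.1] * V.Mword w')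
      have : V.Mword [e.1] = V.mat e.1 := by simp [AffineZVASS.Mword]
      rw [this, ← hN, mul_assoc]
    · rw [disp_cons, hd']
      have heq : V.eff (w' ++ [e.1]) 0 = (V.mat e.1).mulVec (V.eff w' 0) + V.vec e.1 := by
        rw [eff_append V w' [e.1]]; rfl
      rw [heq, Matrix.mulVec_add, Matrix.mulVec_mulVec, ← hN]
      simp only [labV]
      abel

lemma graph_complete (A : List (Q × ↥V.monoidOf)) (hA : ∀ s, s ∈ A) :
    ∀ (w : List T) (b a : Q), V.IsPath w b a → ∀ (N N'' : ↥V.monoidOf),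
      (N'' : Matrix (Fin d) (Fin d) ℤ) = (N : Matrix (Fin d) (Fin d) ℤ) * V.Mword w →
      ∃ x : List (T × ↥V.monoidOf),
        gPathIn (gsV V) (gtV V) A x (a, N) (b, N'') ∧
        disp (labV V) x = (N : Matrix (Fin d) (Fin d) ℤ).mulVec (V.eff w 0) := by
  intro w
  induction w with
  | nil =>
    intro b a hw N N'' hN
    cases hw
    have : N'' = N := Subtype.ext (by simpa [AffineZVASS.Mword] using hN)
    subst this
    exact ⟨[], rfl, by simp [AffineZVASS.eff]⟩
  | cons t w' ih =>
    intro b a hw N N'' hN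
    obtain ⟨hsrc, hpath⟩ := hw
    set M' : ↥V.monoidOf := ⟨(N : Matrix (Fin d) (Fin d) ℤ) * V.Mword w',
      mul_mem N.2 (mword_mem V w')⟩ with hM'
    obtain ⟨x', hx', hd'⟩ := ih (V.tgt t) a hpath N M' rfl
    refine ⟨x' ++ [(t, M')], ?_, ?_⟩
    · refine gPathIn_append (hA _) hx' ?_
      show gsV V (t, M') = (V.tgt t, M') ∧ gtV V (t, M') = (b, N'')
      refine ⟨rfl, ?_⟩
      show (V.src t, _) = (b, N'')
      rw [hsrc]
      refine Prod.ext rfl (Subtype.ext ?_)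
      show (M' : Matrix (Fin d) (Fin d) ℤ) * V.mat t = (N'' : Matrix (Fin d) (Fin d) ℤ)
      rw [hN]
      show ((N : Matrix (Fin d) (Fin d) ℤ) * V.Mword w') * V.mat t = (N : Matrix (Fin d) (Fin d) ℤ) * (V.Mword w' * V.mat t)
      rw [mul_assoc]
    · rw [disp_append, hd']
      have : disp (labV V) [(t, M')] = (M' : Matrix (Fin d) (Fin d) ℤ).mulVec (V.vec t) := by
        simp [labV]
      rw [this]
      have heff : V.eff (t :: w') 0 = (V.Mword w').mulVec (V.vec t) + V.eff w' 0 := by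
        show V.eff w' ((V.mat t).mulVec 0 + V.vec t) = _
        rw [Matrix.mulVec_zero, zero_add, eff_affine V w' (V.vec t)]
      rw [heff, Matrix.mulVec_add]
      show _ = _
      rw [hM']
      simp only [← Matrix.mulVec_mulVec]
      abel

end VASS

end SLAux

open SLAux

open AffineZVASS in
/-- The reachability relation of an afmp-ℤ-VASS, viewed as a subset of `ℤ^{2d}`,
is semilinear. -/
theorem afmp_reach_semilinear
    (d : ℕ) (Q T : Type) [Fintype Q] [Fintype T] (V : AffineZVASS d Q T)
    (hfin : (V.monoidOf : Set (Matrix (Fin d) (Fin d) ℤ)).Finite)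
    (p q : Q) :
    IsSemilinearSet'
      {x : Fin (2 * d) → ℤ | ∃ u v : Fin d → ℤ, x = concatVec u v ∧ V.Reach (p, u) (q, v)} := by
  classical
  haveI : Finite ↥V.monoidOf := hfin.to_subtype
  haveI : Fintype ↥V.monoidOf := Fintype.ofFinite _
  set AA : List (Q × ↥V.monoidOf) := (Finset.univ : Finset (Q × ↥V.monoidOf)).toList with hAA
  have hAAmem : ∀ s : Q × ↥V.monoidOf, s ∈ AA := fun s => by
    simp [hAA, Finset.mem_toList]
  have hconcat : ∀ (u v u' v' : Fin d → ℤ),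
      concatVec u v + concatVec u' v' = concatVec (u + u') (v + v') := by
    intro u v u' v'
    funext i
    simp only [concatVec, Pi.add_apply]
    split_ifs <;> simp
  have one_mem' : (1 : Matrix (Fin d) (Fin d) ℤ) ∈ V.monoidOf := one_mem _
  have key : {x : Fin (2 * d) → ℤ | ∃ u v : Fin d → ℤ, x = concatVec u v ∧ V.Reach (p, u) (q, v)}
      = ⋃ (M : ↥V.monoidOf),
          (Set.range (fun u : Fin d → ℤ =>
              concatVec u ((M : Matrix (Fin d) (Fin d) ℤ).mulVec u)) +
            (fun c : Fin d → ℤ => concatVec (0 : Fin d → ℤ) c) ''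
              DSet (gsV V) (gtV V) (labV V) AA (q, ⟨1, one_mem'⟩) (p, M)) := by
    ext x
    simp only [Set.mem_setOf_eq, Set.mem_iUnion]
    constructor
    · rintro ⟨u, v, rfl, w, hsw⟩
      obtain ⟨hpath, heff⟩ := (stepWord_iff V w p u (q, v)).1 hsw
      refine ⟨⟨V.Mword w, mword_mem V w⟩, ?_⟩
      obtain ⟨xw, hxw, hd⟩ := graph_complete V AA hAAmem w p q hpath ⟨1, one_mem'⟩
        ⟨V.Mword w, mword_mem V w⟩ (by rw [one_mul])
      rw [Matrix.one_mulVec] at hd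
      refine Set.mem_add.2 ⟨concatVec u ((V.Mword w).mulVec u), ⟨u, rfl⟩,
        concatVec 0 (V.eff w 0), ⟨V.eff w 0, ⟨xw, hxw, hd.symm⟩, rfl⟩, ?_⟩
      rw [hconcat, add_zero, show v = V.eff w u from heff, eff_affine V w u]
    · rintro ⟨M, hx⟩
      obtain ⟨x1, hx1, x2, hx2, hsum⟩ := Set.mem_add.1 hx
      obtain ⟨u, rfl⟩ := hx1
      obtain ⟨c, hc, rfl⟩ := hx2
      obtain ⟨xw, hxw, rfl⟩ := hc
      obtain ⟨w, hpath, hm, hd⟩ := graph_sound V AA xw q ⟨1, one_mem'⟩ p M hxw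
      rw [one_mul] at hm
      rw [Matrix.one_mulVec] at hd
      refine ⟨u, V.eff w u, ?_, w, (stepWord_iff V w p u (q, V.eff w u)).2 ⟨hpath, rfl⟩⟩
      rw [← hsum, hconcat, add_zero, eff_affine V w u, hd, hm]
  rw [key]
  refine isSemilinearSet_iUnion fun M => ?_
  refine SLAux.IsSemilinearSet.add ?_ ?_
  · have him := SLAux.IsSemilinearSet.image (isSemilinearSet_univ (k := d))
      (AddMonoidHom.mk' (fun u : Fin d → ℤ =>
          concatVec u ((M : Matrix (Fin d) (Fin d) ℤ).mulVec u))
        (by intro a b; rw [Matrix.mulVec_add, ← hconcat]))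
    rwa [Set.image_univ] at him
  · exact SLAux.IsSemilinearSet.image (isSemilinearSet_dset AA (q, ⟨1, one_mem'⟩) (p, M))
      (AddMonoidHom.mk' (fun c : Fin d → ℤ => concatVec (0 : Fin d → ℤ) c)
        (by intro a b; rw [hconcat, add_zero]))
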